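/- For every integer n ≥ 4, the displacement difficulties cδ((1 + τ^n_{⌈n/2⌉, ⌊n/2⌋, 0}) / τ^n_{⌊n/2⌋, ⌊n/2⌋, 0}) and cδ((1 + τ^n_{⌊n/2⌋, ⌊n/2⌋, 0}) / τ^n_{⌈n/2⌉, ⌊n/2⌋, 0}) are both equal to 0; equivalently, in each case there is a chain of 2-links from the lower sequence to the upper one. -/

import Mathlib

/-- An arithmetic progression: a proper subset of `ℤ` that is empty, a singleton,
or of the form `n + mℤ` with `m ≥ 2`. -/
def IsAP (Λ : Set ℤ) : Prop :=
  Λ ≠ Set.univ ∧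
    (Λ = ∅ ∨ (∃ n : ℤ, Λ = {n}) ∨
      ∃ n m : ℤ, 2 ≤ m ∧ Λ = {x : ℤ | ∃ k : ℤ, x = n + m * k})
/-- `α i` is increasable: the sequence stays nondecreasing after increasing entry `i` by 1. -/
def Increasable {m : ℕ} (α : Fin m → ℤ) (i : Fin m) : Prop :=
  Monotone (Function.update α i (α i + 1))

/-- `α i` is decreasable: the sequence stays nondecreasing after decreasing entry `i` by 1. -/
def Decreasable {m : ℕ} (α : Fin m → ℤ) (i : Fin m) : Prop :=
  Monotone (Function.update α i (α i - 1))

open Classical in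
/-- Upward displacement of a ramification sequence along `Λ`. -/
noncomputable def dispPlus {m : ℕ} (Λ : Set ℤ) (α : Fin m → ℤ) : Fin m → ℤ :=
  fun i => if Increasable α i ∧ α i + (i.val : ℤ) + 1 ∈ Λ then α i + 1 else α i

open Classical in
/-- Downward displacement of a ramification sequence along `Λ`. -/
noncomputable def dispMinus {m : ℕ} (Λ : Set ℤ) (α : Fin m → ℤ) : Fin m → ℤ :=
  fun i => if Decreasable α i ∧ α i + (i.val : ℤ) ∈ Λ then α i - 1 else α i
/-- `α` and `β` are linked by `Λ` if `α = disp⁻_Λ(β)` and `β = disp⁺_Λ(α)`. -/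
def LinkedBy {m : ℕ} (Λ : Set ℤ) (α β : Fin m → ℤ) : Prop :=
  α = dispMinus Λ β ∧ β = dispPlus Λ α

/-- `α` and `β` are linked if they are linked by some arithmetic progression. -/
def Linked {m : ℕ} (α β : Fin m → ℤ) : Prop :=
  ∃ Λ : Set ℤ, IsAP Λ ∧ LinkedBy Λ α β

/-- The size `|β / α|` of the skew shape `β / α`. -/
def skewSize {m : ℕ} (α β : Fin m → ℤ) : ℤ := ∑ i, (β i - α i)

/-- `β / α` is an `n`-link: `α, β` are linked and `|β / α| = n`. -/
def IsNLink (n : ℤ) {m : ℕ} (α β : Fin m → ℤ) : Prop :=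
  Linked α β ∧ skewSize α β = n
/-- A link chain of length `k` from `α` to `β`: a sequence `α = γ⁰ < γ¹ < ⋯ < γᵏ = β` of
ramification sequences in which each consecutive step is a 1-link or a 2-link. -/
def IsLinkChain {m : ℕ} (α β : Fin m → ℤ) (k : ℕ) (γ : Fin (k+1) → Fin m → ℤ) : Prop :=
  γ 0 = α ∧ γ (Fin.last k) = β ∧ (∀ j, Monotone (γ j)) ∧
    ∀ j : Fin k, IsNLink 1 (γ j.castSucc) (γ j.succ) ∨ IsNLink 2 (γ j.castSucc) (γ j.succ)

/-- The chain threshold `ct(β/α)`: the minimum length of a link chain from `α` to `β`. -/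
noncomputable def chainThreshold {m : ℕ} (α β : Fin m → ℤ) : ℕ :=
  sInf {k | ∃ γ : Fin (k+1) → Fin m → ℤ, IsLinkChain α β k γ}

/-- The displacement difficulty `cδ(β/α) = 2·ct(β/α) − |β/α|`. -/
noncomputable def cdelta {m : ℕ} (α β : Fin m → ℤ) : ℤ :=
  2 * (chainThreshold α β : ℤ) - skewSize α β
/-- The rank-`(n-1)` ramification sequence `τ^n_{a,b,c} = 0^{n-a} 1^{a-b} 2^{b-c} 3^c`. -/
def tau (n a b c : ℕ) : Fin n → ℤ :=
  fun i => if i.val < n - a then 0 else if i.val < n - b then 1 else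
    if i.val < n - c then 2 else 3


lemma increasable_of {m : ℕ} {γ : Fin m → ℤ} (hmono : Monotone γ) (i : Fin m)
    (h : ∀ j, i < j → γ i + 1 ≤ γ j) : Increasable γ i := by
  intro x y hxy
  simp only [Function.update_apply]
  by_cases hx : x = i
  · by_cases hy : y = i
    · simp [hx, hy]
    · rw [if_pos hx, if_neg hy]
      subst hx
      exact h y (lt_of_le_of_ne hxy (Ne.symm hy))
  · rw [if_neg hx]
    by_cases hy : y = i
    · rw [if_pos hy]
      subst hy
      have := hmono hxy
      linarith
    · rw [if_neg hy]
      exact hmono hxy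

lemma not_increasable_of {m : ℕ} {γ : Fin m → ℤ} {i j : Fin m} (hij : i < j)
    (h : γ j ≤ γ i) : ¬ Increasable γ i := by
  intro hI
  have h2 := hI (le_of_lt hij)
  simp only [Function.update_apply, if_neg hij.ne', eq_self_iff_true, if_true] at h2
  linarith

lemma decreasable_of {m : ℕ} {γ : Fin m → ℤ} (hmono : Monotone γ) (i : Fin m)
    (h : ∀ j, j < i → γ j ≤ γ i - 1) : Decreasable γ i := by
  intro x y hxy
  simp only [Function.update_apply]
  by_cases hx : x = i
  · by_cases hy : y = i
    · simp [hx, hy]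
    · rw [if_pos hx, if_neg hy]
      subst hx
      have := hmono hxy
      linarith
  · rw [if_neg hx]
    by_cases hy : y = i
    · rw [if_pos hy]
      subst hy
      exact h x (lt_of_le_of_ne hxy hx)
    · rw [if_neg hy]
      exact hmono hxy

lemma not_decreasable_of {m : ℕ} {γ : Fin m → ℤ} {i j : Fin m} (hji : j < i)
    (h : γ i ≤ γ j) : ¬ Decreasable γ i := by
  intro hD
  have h2 := hD (le_of_lt hji)
  simp only [Function.update_apply, if_neg hji.ne, eq_self_iff_true, if_true] at h2
  linarith

lemma no_mul (M r : ℤ) (h0 : 0 < r) (h1 : r < M) (k : ℤ) : r ≠ M * k := by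
  intro h
  rcases le_or_gt k 0 with hk | hk
  · have h2 : M * k ≤ M * 0 := mul_le_mul_of_nonneg_left hk (by linarith)
    simp at h2; omega
  · have hk1 : (1:ℤ) ≤ k := hk
    have h2 : M * 1 ≤ M * k := mul_le_mul_of_nonneg_left hk1 (by linarith)
    simp at h2; omega

lemma isAP_mod (A M : ℤ) (hM : 2 ≤ M) : IsAP {x : ℤ | ∃ k : ℤ, x = A + M * k} := by
  constructor
  · intro hu
    have hm : A + 1 ∈ {x : ℤ | ∃ k : ℤ, x = A + M * k} := by rw [hu]; trivial
    obtain ⟨k, hk⟩ := hm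
    exact no_mul M 1 one_pos (by omega) k (by linarith)
  · exact Or.inr (Or.inr ⟨A, M, hM, rfl⟩)

lemma skewSize_pair {n : ℕ} (γ β : Fin n → ℤ) (t1 t2 : ℕ) (h1 : t1 < n) (h2 : t2 < n)
    (h : ∀ i : Fin n, β i - γ i =
      (if (i:ℕ) = t1 then 1 else 0) + (if (i:ℕ) = t2 then 1 else 0)) :
    skewSize γ β = 2 := by
  have h' : ∀ i : Fin n, β i - γ i =
      (if i = (⟨t1, h1⟩ : Fin n) then (1:ℤ) else 0) + (if i = (⟨t2, h2⟩ : Fin n) then 1 else 0) := by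
    intro i
    rw [h i]
    congr 1 <;> simp [Fin.ext_iff]
  unfold skewSize
  simp only [h']
  rw [Finset.sum_add_distrib, Finset.sum_ite_eq', Finset.sum_ite_eq']
  simp

lemma telescope_int {k : ℕ} (g : Fin (k+1) → ℤ) :
    ∑ j : Fin k, (g j.succ - g j.castSucc) = g (Fin.last k) - g 0 := by
  induction k with
  | zero => simp
  | succ k ih =>
    rw [Fin.sum_univ_castSucc]
    have h2 := ih (fun j => g j.castSucc)
    simp only [← Fin.succ_castSucc] at h2
    rw [h2]
    simp [Fin.succ_last]

lemma skewSize_telescope {n k : ℕ} (γ : Fin (k+1) → Fin n → ℤ) :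
    ∑ j : Fin k, skewSize (γ j.castSucc) (γ j.succ) = skewSize (γ 0) (γ (Fin.last k)) := by
  unfold skewSize
  rw [Finset.sum_comm]
  exact Finset.sum_congr rfl fun i _ => telescope_int (fun j => γ j i)

lemma cdelta_of_chain {n : ℕ} (α β : Fin n → ℤ) (k : ℕ) (γ : Fin (k+1) → Fin n → ℤ)
    (hch : IsLinkChain α β k γ) (h2 : ∀ j : Fin k, IsNLink 2 (γ j.castSucc) (γ j.succ)) :
    cdelta α β = 0 := by
  have hsz : skewSize α β = 2 * (k : ℤ) := by
    have hT := skewSize_telescope γ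
    rw [hch.1, hch.2.1] at hT
    rw [← hT, Finset.sum_congr rfl fun j _ => (h2 j).2]
    simp [mul_comm]
  have hub : ∀ k' ∈ {k' | ∃ γ' : Fin (k'+1) → Fin n → ℤ, IsLinkChain α β k' γ'}, k ≤ k' := by
    rintro k' ⟨γ', hch'⟩
    have hT : skewSize α β = ∑ j : Fin k', skewSize (γ' j.castSucc) (γ' j.succ) := by
      have := skewSize_telescope γ'
      rw [hch'.1, hch'.2.1] at this
      omega
    have hle : ∑ j : Fin k', skewSize (γ' j.castSucc) (γ' j.succ) ≤ ∑ _j : Fin k', (2:ℤ) := by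
      apply Finset.sum_le_sum
      intro j _
      rcases hch'.2.2.2 j with hl | hl
      · rw [hl.2]; norm_num
      · rw [hl.2]
    have hconst : ∑ _j : Fin k', (2:ℤ) = 2 * (k' : ℤ) := by simp [mul_comm]
    rw [hT] at hsz
    rw [hconst] at hle
    omega
  have hmem : k ∈ {k' | ∃ γ' : Fin (k'+1) → Fin n → ℤ, IsLinkChain α β k' γ'} := ⟨γ, hch⟩
  have hct : chainThreshold α β = k :=
    le_antisymm (Nat.sInf_le hmem) (le_csInf ⟨k, hmem⟩ hub)
  unfold cdelta
  rw [hct, hsz]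
  ring

def blk (n a b c : ℕ) : Fin n → ℤ :=
  fun i => if (i : ℕ) < a then 0 else if (i : ℕ) < a + b then 1 else
    if (i : ℕ) < a + b + c then 2 else 3

lemma monotone_blk (n a b c : ℕ) : Monotone (blk n a b c) := by
  intro x y hxy
  have hxy' : (x : ℕ) ≤ (y : ℕ) := hxy
  simp only [blk]; split_ifs <;> omega

set_option maxHeartbeats 2000000 in
lemma stepA (n a b c a' b' c' : ℕ) (ha : a = a' + 1) (hb : b' = b + 1) (hc : c = c' + 1)
    (hab : a ≤ b + c + 1) (hn1 : a + b + c ≤ n) (hn2 : n ≤ a + 2*b + 2*c) :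
    IsNLink 2 (blk n a b c) (blk n a' b' c') := by
  set Λ : Set ℤ := {x : ℤ | ∃ k : ℤ, x = (a:ℤ) + ((b:ℤ) + (c:ℤ) + 2) * k} with hΛdef
  have hM : (2:ℤ) ≤ (b:ℤ) + (c:ℤ) + 2 := by omega
  have hmono := monotone_blk n a b c
  have hmono' := monotone_blk n a' b' c'
  have hplus : blk n a' b' c' = dispPlus Λ (blk n a b c) := by
    funext i
    have hi : (i:ℕ) < n := i.isLt
    simp only [dispPlus]
    by_cases h1 : (i:ℕ) = a - 1
    · rw [if_pos ?_]
      · simp only [blk]; split_ifs <;> omega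
      constructor
      · apply increasable_of hmono
        intro j hj
        have hj' : (i:ℕ) < (j:ℕ) := hj
        simp only [blk]; split_ifs <;> omega
      · have hv : blk n a b c i = 0 := by
          simp only [blk]; rw [if_pos (by omega)]
        refine ⟨0, ?_⟩
        rw [hv, mul_zero]
        omega
    · by_cases h2 : (i:ℕ) = a + b + c - 1
      · rw [if_pos ?_]
        · simp only [blk]; split_ifs <;> omega
        constructor
        · apply increasable_of hmono
          intro j hj
          have hj' : (i:ℕ) < (j:ℕ) := hj
          simp only [blk]; split_ifs <;> omega
        · have hv : blk n a b c i = 2 := by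
            simp only [blk]
            rw [if_neg (by omega), if_neg (by omega), if_pos (by omega)]
          refine ⟨1, ?_⟩
          rw [hv, mul_one]
          omega
      · rw [if_neg ?_]
        · simp only [blk]; split_ifs <;> omega
        rintro ⟨hI, hmem⟩
        by_cases h3 : (i:ℕ) = a + b - 1
        · -- last 1, membership contradiction
          have hv : blk n a b c i = 1 := by
            simp only [blk]; rw [if_neg (by omega), if_pos (by omega)]
          rw [hv] at hmem
          obtain ⟨k, hk⟩ := hmem
          have hi' : ((i:ℕ):ℤ) + 1 = (a:ℤ) + (b:ℤ) := by
            have : (i:ℕ) + 1 = a + b := by omega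
            exact_mod_cast this
          refine no_mul ((b:ℤ)+(c:ℤ)+2) ((b:ℤ)+1) (by omega) (by omega) k ?_
          linarith
        · by_cases h4 : (i:ℕ) = n - 1
          · -- last 3, membership contradiction
            have hv : blk n a b c i = 3 := by
              simp only [blk]
              rw [if_neg (by omega), if_neg (by omega), if_neg (by omega)]
            rw [hv] at hmem
            obtain ⟨k, hk⟩ := hmem
            have hi' : ((i:ℕ):ℤ) + 1 = (n:ℤ) := by
              have : (i:ℕ) + 1 = n := by omega
              exact_mod_cast this
            have hd1 : (0:ℤ) < (n:ℤ) + 1 - a - b - c := by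
              have : a + b + c + 1 ≤ n := by omega
              push_cast at this ⊢; omega
            have hd2 : (n:ℤ) + 1 - a - b - c < (b:ℤ) + (c:ℤ) + 2 := by
              push_cast; omega
            refine no_mul ((b:ℤ)+(c:ℤ)+2) ((n:ℤ)+1-a-b-c) hd1 hd2 (k-1) ?_
            have hexp : ((b:ℤ)+(c:ℤ)+2) * (k-1) = ((b:ℤ)+(c:ℤ)+2)*k - ((b:ℤ)+(c:ℤ)+2) := by
              ring
            linarith
          · -- interior: not increasable
            have hlt : (i:ℕ) + 1 < n := by omega
            refine not_increasable_of (j := ⟨(i:ℕ)+1, hlt⟩) ?_ ?_ hI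
            · exact Fin.lt_def.mpr (Nat.lt_succ_self _)
            · simp only [blk]; split_ifs <;> omega
  have hminus : blk n a b c = dispMinus Λ (blk n a' b' c') := by
    funext i
    have hi : (i:ℕ) < n := i.isLt
    simp only [dispMinus]
    by_cases h1 : (i:ℕ) = a - 1
    · rw [if_pos ?_]
      · simp only [blk]; split_ifs <;> omega
      constructor
      · apply decreasable_of hmono'
        intro j hj
        have hj' : (j:ℕ) < (i:ℕ) := hj
        simp only [blk]; split_ifs <;> omega
      · have hv : blk n a' b' c' i = 1 := by
          simp only [blk]; rw [if_neg (by omega), if_pos (by omega)]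
        refine ⟨0, ?_⟩
        rw [hv, mul_zero]
        omega
    · by_cases h2 : (i:ℕ) = a + b + c - 1
      · rw [if_pos ?_]
        · simp only [blk]; split_ifs <;> omega
        constructor
        · apply decreasable_of hmono'
          intro j hj
          have hj' : (j:ℕ) < (i:ℕ) := hj
          simp only [blk]; split_ifs <;> omega
        · have hv : blk n a' b' c' i = 3 := by
            simp only [blk]
            rw [if_neg (by omega), if_neg (by omega), if_neg (by omega)]
          refine ⟨1, ?_⟩
          rw [hv, mul_one]
          omega
      · rw [if_neg ?_]
        · simp only [blk]; split_ifs <;> omega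
        rintro ⟨hD, hmem⟩
        by_cases h3 : (i:ℕ) = 0
        · -- first 0 of β (a ≥ 2 here), membership contradiction
          have hv : blk n a' b' c' i = 0 := by
            simp only [blk]; rw [if_pos (by omega)]
          rw [hv] at hmem
          obtain ⟨k, hk⟩ := hmem
          have hi' : ((i:ℕ):ℤ) = 0 := by exact_mod_cast h3
          refine no_mul ((b:ℤ)+(c:ℤ)+2) ((a:ℤ)) (by omega) (by push_cast; omega) (-k) ?_
          have hexp : ((b:ℤ)+(c:ℤ)+2) * (-k) = -(((b:ℤ)+(c:ℤ)+2)*k) := by ring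
          linarith
        · by_cases h4 : (i:ℕ) = a + b
          · -- first 2 of β (c ≥ 2 here), membership contradiction
            have hv : blk n a' b' c' i = 2 := by
              simp only [blk]
              rw [if_neg (by omega), if_neg (by omega), if_pos (by omega)]
            rw [hv] at hmem
            obtain ⟨k, hk⟩ := hmem
            have hi' : ((i:ℕ):ℤ) = (a:ℤ) + (b:ℤ) := by exact_mod_cast h4
            refine no_mul ((b:ℤ)+(c:ℤ)+2) ((b:ℤ)+2) (by omega) (by omega) k ?_
            linarith
          · -- interior: not decreasable
            have hpos : 0 < (i:ℕ) := by omega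
            have hlt : (i:ℕ) - 1 < n := by omega
            refine not_decreasable_of (j := ⟨(i:ℕ)-1, hlt⟩) ?_ ?_ hD
            · exact Fin.lt_def.mpr (by simp; omega)
            · simp only [blk]; split_ifs <;> omega
  have hskew : skewSize (blk n a b c) (blk n a' b' c') = 2 := by
    apply skewSize_pair _ _ (a-1) (a+b+c-1) (by omega) (by omega)
    intro i
    simp only [blk]; split_ifs <;> omega
  exact ⟨⟨Λ, isAP_mod _ _ hM, hminus, hplus⟩, hskew⟩

set_option maxHeartbeats 2000000 in
lemma stepB (p : ℕ) (hp : 2 ≤ p) :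
    IsNLink 2 (blk (2*p+1) 1 p 0) (blk (2*p+1) 0 p 1) := by
  set n : ℕ := 2*p+1 with hn
  set Λ : Set ℤ := {x : ℤ | ∃ k : ℤ, x = 1 + ((p:ℤ) + 1) * k} with hΛdef
  have hM : (2:ℤ) ≤ (p:ℤ) + 1 := by omega
  have hmono := monotone_blk n 1 p 0
  have hmono' := monotone_blk n 0 p 1
  have hplus : blk n 0 p 1 = dispPlus Λ (blk n 1 p 0) := by
    funext i
    have hi : (i:ℕ) < n := i.isLt
    simp only [dispPlus]
    by_cases h1 : (i:ℕ) = 0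
    · rw [if_pos ?_]
      · simp only [blk]; split_ifs <;> omega
      constructor
      · apply increasable_of hmono
        intro j hj
        have hj' : (i:ℕ) < (j:ℕ) := hj
        simp only [blk]; split_ifs <;> omega
      · have hv : blk n 1 p 0 i = 0 := by
          simp only [blk]; rw [if_pos (by omega)]
        refine ⟨0, ?_⟩
        rw [hv, mul_zero]
        omega
    · by_cases h2 : (i:ℕ) = p
      · rw [if_pos ?_]
        · simp only [blk]; split_ifs <;> omega
        constructor
        · apply increasable_of hmono
          intro j hj
          have hj' : (i:ℕ) < (j:ℕ) := hj
          simp only [blk]; split_ifs <;> omega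
        · have hv : blk n 1 p 0 i = 1 := by
            simp only [blk]; rw [if_neg (by omega), if_pos (by omega)]
          refine ⟨1, ?_⟩
          rw [hv, mul_one]
          omega
      · rw [if_neg ?_]
        · simp only [blk]; split_ifs <;> omega
        rintro ⟨hI, hmem⟩
        by_cases h4 : (i:ℕ) = n - 1
        · have hv : blk n 1 p 0 i = 3 := by
            simp only [blk]
            rw [if_neg (by omega), if_neg (by omega), if_neg (by omega)]
          rw [hv] at hmem
          obtain ⟨k, hk⟩ := hmem
          have hi' : ((i:ℕ):ℤ) = 2*(p:ℤ) := by
            have : (i:ℕ) = 2*p := by omega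
            exact_mod_cast this
          refine no_mul ((p:ℤ)+1) 1 one_pos (by omega) (k-2) ?_
          have hexp : ((p:ℤ)+1) * (k-2) = ((p:ℤ)+1)*k - 2*((p:ℤ)+1) := by ring
          linarith
        · have hlt : (i:ℕ) + 1 < n := by omega
          refine not_increasable_of (j := ⟨(i:ℕ)+1, hlt⟩) ?_ ?_ hI
          · exact Fin.lt_def.mpr (Nat.lt_succ_self _)
          · simp only [blk]; split_ifs <;> omega
  have hminus : blk n 1 p 0 = dispMinus Λ (blk n 0 p 1) := by
    funext i
    have hi : (i:ℕ) < n := i.isLt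
    simp only [dispMinus]
    by_cases h1 : (i:ℕ) = 0
    · rw [if_pos ?_]
      · simp only [blk]; split_ifs <;> omega
      constructor
      · apply decreasable_of hmono'
        intro j hj
        have hj' : (j:ℕ) < (i:ℕ) := hj
        omega
      · have hv : blk n 0 p 1 i = 1 := by
          simp only [blk]; rw [if_neg (by omega), if_pos (by omega)]
        refine ⟨0, ?_⟩
        rw [hv, mul_zero]
        omega
    · by_cases h2 : (i:ℕ) = p
      · rw [if_pos ?_]
        · simp only [blk]; split_ifs <;> omega
        constructor
        · apply decreasable_of hmono'
          intro j hj
          have hj' : (j:ℕ) < (i:ℕ) := hj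
          simp only [blk]; split_ifs <;> omega
        · have hv : blk n 0 p 1 i = 2 := by
            simp only [blk]
            rw [if_neg (by omega), if_neg (by omega), if_pos (by omega)]
          refine ⟨1, ?_⟩
          rw [hv, mul_one]
          omega
      · rw [if_neg ?_]
        · simp only [blk]; split_ifs <;> omega
        rintro ⟨hD, hmem⟩
        by_cases h3 : (i:ℕ) = p + 1
        · have hv : blk n 0 p 1 i = 3 := by
            simp only [blk]
            rw [if_neg (by omega), if_neg (by omega), if_neg (by omega)]
          rw [hv] at hmem
          obtain ⟨k, hk⟩ := hmem
          have hi' : ((i:ℕ):ℤ) = (p:ℤ)+1 := by exact_mod_cast h3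
          refine no_mul ((p:ℤ)+1) 2 (by omega) (by omega) (k-1) ?_
          have hexp : ((p:ℤ)+1) * (k-1) = ((p:ℤ)+1)*k - ((p:ℤ)+1) := by ring
          linarith
        · have hpos : 0 < (i:ℕ) := by omega
          have hlt : (i:ℕ) - 1 < n := by omega
          refine not_decreasable_of (j := ⟨(i:ℕ)-1, hlt⟩) ?_ ?_ hD
          · exact Fin.lt_def.mpr (by show (i:ℕ) - 1 < (i:ℕ); omega)
          · simp only [blk]; split_ifs <;> omega
  have hskew : skewSize (blk n 1 p 0) (blk n 0 p 1) = 2 := by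
    apply skewSize_pair _ _ 0 p (by omega) (by omega)
    intro i
    simp only [blk]; split_ifs <;> omega
  exact ⟨⟨Λ, isAP_mod _ _ hM, hminus, hplus⟩, hskew⟩

set_option maxHeartbeats 2000000

/-- For every `n ≥ 4`, the displacement difficulties
`cδ((1 + τ^n_{⌈n/2⌉,⌊n/2⌋,0}) / τ^n_{⌊n/2⌋,⌊n/2⌋,0})` and
`cδ((1 + τ^n_{⌊n/2⌋,⌊n/2⌋,0}) / τ^n_{⌈n/2⌉,⌊n/2⌋,0})` are both zero. -/
theorem cdelta_floorCeil (n : ℕ) (h : 4 ≤ n) :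
    cdelta (tau n (n/2) (n/2) 0) (fun i => 1 + tau n ((n+1)/2) (n/2) 0 i) = 0 ∧
    cdelta (tau n ((n+1)/2) (n/2) 0) (fun i => 1 + tau n (n/2) (n/2) 0 i) = 0 := by
  obtain ⟨p, hp2, hpar⟩ : ∃ p, 2 ≤ p ∧ (n = 2*p ∨ n = 2*p+1) := ⟨n/2, by omega, by omega⟩
  rcases hpar with hn | hn
  · -- n even
    rw [show n/2 = p from by omega, show (n+1)/2 = p from by omega]
    have main : cdelta (tau n p p 0) (fun i => 1 + tau n p p 0 i) = 0 := by
      have hstep : ∀ j : Fin p,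
          IsNLink 2 (blk n (p - ((j.castSucc : Fin (p+1)):ℕ)) ((j.castSucc : Fin (p+1)):ℕ)
              (p - ((j.castSucc : Fin (p+1)):ℕ)))
            (blk n (p - ((j.succ : Fin (p+1)):ℕ)) ((j.succ : Fin (p+1)):ℕ)
              (p - ((j.succ : Fin (p+1)):ℕ))) := by
        intro j
        have hj : (j:ℕ) < p := j.isLt
        simp only [Fin.coe_castSucc, Fin.val_succ]
        exact stepA n (p - (j:ℕ)) (j:ℕ) (p - (j:ℕ)) (p - ((j:ℕ)+1)) ((j:ℕ)+1) (p - ((j:ℕ)+1))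
          (by omega) (by omega) (by omega) (by omega) (by omega) (by omega)
      apply cdelta_of_chain _ _ p (fun j => blk n (p - (j:ℕ)) (j:ℕ) (p - (j:ℕ)))
      · refine ⟨?_, ?_, fun j => monotone_blk _ _ _ _, fun j => Or.inr (hstep j)⟩
        · funext i
          have hi := i.isLt
          simp only [blk, tau, Fin.val_zero]
          split_ifs <;> omega
        · funext i
          have hi := i.isLt
          simp only [blk, tau, Fin.val_last]
          split_ifs <;> omega
      · exact hstep
    exact ⟨main, main⟩
  · -- n odd
    rw [show n/2 = p from by omega, show (n+1)/2 = p+1 from by omega]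
    constructor
    · -- case 1: tau n p p 0 --> 1 + tau n (p+1) p 0
      have hstep : ∀ j : Fin (p+1),
          IsNLink 2 ((fun j : Fin (p+2) => if (j:ℕ) ≤ p then
                blk n (p+1 - (j:ℕ)) (j:ℕ) (p - (j:ℕ)) else blk n 0 p 1) j.castSucc)
            ((fun j : Fin (p+2) => if (j:ℕ) ≤ p then
                blk n (p+1 - (j:ℕ)) (j:ℕ) (p - (j:ℕ)) else blk n 0 p 1) j.succ) := by
        intro j
        have hj : (j:ℕ) < p + 1 := j.isLt
        simp only [Fin.coe_castSucc, Fin.val_succ]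
        rw [if_pos (by omega : (j:ℕ) ≤ p)]
        by_cases hjp : (j:ℕ) < p
        · rw [if_pos (by omega : (j:ℕ) + 1 ≤ p)]
          exact stepA n (p+1 - (j:ℕ)) (j:ℕ) (p - (j:ℕ)) (p+1 - ((j:ℕ)+1)) ((j:ℕ)+1)
            (p - ((j:ℕ)+1)) (by omega) (by omega) (by omega) (by omega) (by omega) (by omega)
        · rw [if_neg (by omega : ¬ ((j:ℕ) + 1 ≤ p))]
          have hjp' : (j:ℕ) = p := by omega
          rw [hjp', show p + 1 - p = 1 from by omega, show p - p = 0 from by omega, hn]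
          exact stepB p hp2
      apply cdelta_of_chain _ _ (p+1) (fun j : Fin (p+2) => if (j:ℕ) ≤ p then
          blk n (p+1 - (j:ℕ)) (j:ℕ) (p - (j:ℕ)) else blk n 0 p 1)
      · refine ⟨?_, ?_, fun j => ?_, fun j => Or.inr (hstep j)⟩
        · show (if (((0:Fin (p+2))):ℕ) ≤ p then blk n (p+1 - (((0:Fin (p+2))):ℕ)) (((0:Fin (p+2))):ℕ) (p - (((0:Fin (p+2))):ℕ)) else blk n 0 p 1) = _
          simp only [Fin.val_zero]
          simp only [Nat.zero_le, ↓reduceIte]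
          funext i
          have hi := i.isLt
          simp only [blk, tau]
          split_ifs <;> omega
        · show (if ((Fin.last (p+1)):ℕ) ≤ p then blk n (p+1 - ((Fin.last (p+1)):ℕ)) ((Fin.last (p+1)):ℕ) (p - ((Fin.last (p+1)):ℕ)) else blk n 0 p 1) = _
          simp only [Fin.val_last]
          rw [if_neg (by omega : ¬ (p + 1 ≤ p))]
          funext i
          have hi := i.isLt
          simp only [blk, tau]
          split_ifs <;> omega
        · dsimp only
          split_ifs <;> exact monotone_blk _ _ _ _
      · exact hstep
    · -- case 2: tau n (p+1) p 0 --> 1 + tau n p p 0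
      have hstep : ∀ j : Fin p,
          IsNLink 2 (blk n (p - ((j.castSucc : Fin (p+1)):ℕ)) (1 + ((j.castSucc : Fin (p+1)):ℕ))
              (p - ((j.castSucc : Fin (p+1)):ℕ)))
            (blk n (p - ((j.succ : Fin (p+1)):ℕ)) (1 + ((j.succ : Fin (p+1)):ℕ))
              (p - ((j.succ : Fin (p+1)):ℕ))) := by
        intro j
        have hj : (j:ℕ) < p := j.isLt
        simp only [Fin.coe_castSucc, Fin.val_succ]
        exact stepA n (p - (j:ℕ)) (1 + (j:ℕ)) (p - (j:ℕ)) (p - ((j:ℕ)+1)) (1 + ((j:ℕ)+1))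
          (p - ((j:ℕ)+1)) (by omega) (by omega) (by omega) (by omega) (by omega) (by omega)
      apply cdelta_of_chain _ _ p (fun j => blk n (p - (j:ℕ)) (1 + (j:ℕ)) (p - (j:ℕ)))
      · refine ⟨?_, ?_, fun j => monotone_blk _ _ _ _, fun j => Or.inr (hstep j)⟩
        · funext i
          have hi := i.isLt
          simp only [blk, tau, Fin.val_zero]
          split_ifs <;> omega
        · funext i
          have hi := i.isLt
          simp only [blk, tau, Fin.val_last]
          split_ifs <;> omega
      · exact hstep
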